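/- arXiv:0804.4362 — 2 statements merged into one kernel-verified Lean document; each statement's English description precedes it below -/
import Mathlib

section
/- Let h : [0,∞) → ℝ be measurable, integrable on [0,1], and 1-periodic. Then lim_{α→0⁺} 2α ∫_0^∞ e^{-2αt} h(t) dt = ∫_0^1 h(t) dt. -/
open Filter Real MeasureTheory Set

namespace Stmt2Aux

lemma per_nat {h : ℝ → ℝ} (hper : ∀ t : ℝ, 0 ≤ t → h (t + 1) = h t) :
    ∀ (k : ℕ) (t : ℝ), 0 ≤ t → h (t + k) = h t := by
  intro k
  induction k with
  | zero => intro t ht; simp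
  | succ n ih =>
    intro t ht
    have e : (t + ((n : ℕ) + 1 : ℕ) : ℝ) = (t + n) + 1 := by push_cast; ring
    rw [e, hper _ (add_nonneg ht (Nat.cast_nonneg n)), ih t ht]

/-- The function `t ↦ exp(-2αt) * h t` is interval integrable on `[k, k+1]`. -/
lemma aux_ii {h : ℝ → ℝ} (hm : Measurable h) (hint : IntegrableOn h (Set.Icc 0 1))
    (hper : ∀ t : ℝ, 0 ≤ t → h (t + 1) = h t) (α : ℝ) (k : ℕ) :
    IntervalIntegrable (fun t => Real.exp (-2 * α * t) * h t) volume (k : ℝ) ((k : ℝ) + 1) := by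
  have h01 : IntervalIntegrable h volume 0 1 := by
    rw [intervalIntegrable_iff_integrableOn_Ioc_of_le zero_le_one]
    exact hint.mono_set Set.Ioc_subset_Icc_self
  have hks : IntervalIntegrable (fun x => h (x + -(k : ℝ))) volume (k : ℝ) ((k : ℝ) + 1) := by
    have := h01.comp_add_right (-(k : ℝ))
    simpa [sub_neg_eq_add, add_comm] using this
  have hmul : IntervalIntegrable (fun t => Real.exp (-2 * α * t) * h (t + -(k : ℝ)))
      volume (k : ℝ) ((k : ℝ) + 1) :=
    hks.continuousOn_mul (Continuous.continuousOn (by continuity))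
  have hk1 : (k : ℝ) ≤ (k : ℝ) + 1 := by linarith
  rw [intervalIntegrable_iff_integrableOn_Ioc_of_le hk1] at hmul ⊢
  refine hmul.congr_fun (fun x hx => ?_) measurableSet_Ioc
  have hx0 : (0 : ℝ) ≤ x - k := by
    have := hx.1; linarith
  have := per_nat hper k (x - k) hx0
  simp only [sub_add_cancel] at this
  show Real.exp (-2 * α * x) * h (x + -(k : ℝ)) = Real.exp (-2 * α * x) * h x
  rw [show x + -(k : ℝ) = x - k by ring, this]

lemma aux_eq {h : ℝ → ℝ} (hm : Measurable h) (hint : IntegrableOn h (Set.Icc 0 1))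
    (hper : ∀ t : ℝ, 0 ≤ t → h (t + 1) = h t) (α : ℝ) (k : ℕ) :
    ∫ t in (k : ℝ)..((k : ℝ) + 1), Real.exp (-2 * α * t) * h t
      = Real.exp (-2 * α) ^ k * ∫ s in (0 : ℝ)..1, Real.exp (-2 * α * s) * h s := by
  have step1 : ∫ t in (k : ℝ)..((k : ℝ) + 1), Real.exp (-2 * α * t) * h t
      = ∫ t in (k : ℝ)..((k : ℝ) + 1), Real.exp (-2 * α * t) * h (t - k) := by
    apply intervalIntegral.integral_congr
    intro x hx
    rw [Set.uIcc_of_le (by linarith : (k : ℝ) ≤ (k : ℝ) + 1)] at hx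
    have hx0 : (0 : ℝ) ≤ x - k := by have := hx.1; linarith
    have := per_nat hper k (x - k) hx0
    simp only [sub_add_cancel] at this
    show Real.exp (-2 * α * x) * h x = Real.exp (-2 * α * x) * h (x - k)
    rw [this]
  have step2 : ∫ t in (k : ℝ)..((k : ℝ) + 1), Real.exp (-2 * α * t) * h (t - k)
      = ∫ s in (0 : ℝ)..1, Real.exp (-2 * α * (s + k)) * h s := by
    have := intervalIntegral.integral_comp_add_right
      (a := (0 : ℝ)) (b := 1) (fun t => Real.exp (-2 * α * t) * h (t - k)) (k : ℝ)
    simp only [add_sub_cancel_right, zero_add] at this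
    rw [this, add_comm (1:ℝ) (k:ℝ)]
  rw [step1, step2]
  have step3 : ∀ s : ℝ, Real.exp (-2 * α * (s + k)) * h s
      = Real.exp (-2 * α) ^ k * (Real.exp (-2 * α * s) * h s) := by
    intro s
    rw [show -2 * α * (s + k) = (-2 * α * s) + (k : ℝ) * (-2 * α) by ring, Real.exp_add,
      Real.exp_nat_mul]
    ring
  simp only [step3]
  rw [intervalIntegral.integral_const_mul]

lemma aux_partial {h : ℝ → ℝ} (hm : Measurable h) (hint : IntegrableOn h (Set.Icc 0 1))
    (hper : ∀ t : ℝ, 0 ≤ t → h (t + 1) = h t) (α : ℝ) (n : ℕ) :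
    ∫ t in (0 : ℝ)..(n : ℝ), Real.exp (-2 * α * t) * h t
      = (∑ k ∈ Finset.range n, Real.exp (-2 * α) ^ k)
          * ∫ s in (0 : ℝ)..1, Real.exp (-2 * α * s) * h s := by
  have key := intervalIntegral.sum_integral_adjacent_intervals (μ := volume)
    (a := fun k : ℕ => (k : ℝ)) (f := fun t => Real.exp (-2 * α * t) * h t) (n := n)
    (fun k _ => by
      have := aux_ii hm hint hper α k
      simpa [Nat.cast_succ] using this)
  simp only [Nat.cast_zero] at key
  rw [← key, Finset.sum_mul]
  apply Finset.sum_congr rfl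
  intro k _
  have := aux_eq hm hint hper α k
  simpa [Nat.cast_succ] using this

end Stmt2Aux

open Stmt2Aux

theorem stmt2 (h : ℝ → ℝ) (hm : Measurable h)
    (hint : IntegrableOn h (Set.Icc 0 1))
    (hper : ∀ t : ℝ, 0 ≤ t → h (t + 1) = h t) :
    Tendsto (fun α : ℝ => 2 * α * ∫ t in Set.Ioi (0:ℝ), Real.exp (-2 * α * t) * h t)
      (nhdsWithin 0 (Set.Ioi 0)) (nhds (∫ t in Set.Icc (0:ℝ) 1, h t)) := by
  -- notation
  set c : ℝ → ℝ := fun α => ∫ s in (0 : ℝ)..1, Real.exp (-2 * α * s) * h s with hc_def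
  -- absolute value versions of hypotheses
  have hm' : Measurable fun t => |h t| := hm.abs
  have hint' : IntegrableOn (fun t => |h t|) (Set.Icc 0 1) := hint.abs
  have hper' : ∀ t : ℝ, 0 ≤ t → |h (t + 1)| = |h t| := fun t ht => by rw [hper t ht]
  -- Step 1: for α > 0, the integral over Ioi 0 equals (1 - e^{-2α})⁻¹ * c α
  have main : ∀ α : ℝ, 0 < α →
      (∫ t in Set.Ioi (0:ℝ), Real.exp (-2 * α * t) * h t)
        = (1 - Real.exp (-2 * α))⁻¹ * c α := by
    intro α hα
    set r : ℝ := Real.exp (-2 * α) with hr_def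
    have hr0 : 0 ≤ r := Real.exp_nonneg _
    have hr1 : r < 1 := by
      rw [hr_def, Real.exp_lt_one_iff]
      nlinarith
    -- integrability on Ioi 0
    have hII : ∀ n : ℕ, IntegrableOn (fun t => Real.exp (-2 * α * t) * h t)
        (Set.Ioc (0 : ℝ) (n : ℝ)) := by
      intro n
      have : IntervalIntegrable (fun t => Real.exp (-2 * α * t) * h t) volume
          ((0 : ℕ) : ℝ) ((n : ℕ) : ℝ) := by
        apply IntervalIntegrable.trans_iterate (a := fun k : ℕ => (k : ℝ))
        intro k _
        simpa [Nat.cast_succ] using aux_ii hm hint hper α k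
      rw [intervalIntegrable_iff_integrableOn_Ioc_of_le (by exact_mod_cast n.zero_le)] at this
      simpa using this
    have habs_norm : (fun t : ℝ => ‖Real.exp (-2 * α * t) * h t‖)
        = fun t => Real.exp (-2 * α * t) * |h t| := by
      funext t
      rw [Real.norm_eq_abs, abs_mul, abs_of_pos (Real.exp_pos _)]
    have cabs_nonneg : 0 ≤ ∫ s in (0:ℝ)..1, Real.exp (-2 * α * s) * |h s| := by
      apply intervalIntegral.integral_nonneg zero_le_one
      intro u _
      positivity
    have hbound : ∀ n : ℕ, (∫ t in (0:ℝ)..(n:ℝ), ‖Real.exp (-2 * α * t) * h t‖)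
        ≤ (1 - r)⁻¹ * ∫ s in (0:ℝ)..1, Real.exp (-2 * α * s) * |h s| := by
      intro n
      rw [habs_norm, aux_partial hm' hint' hper' α n]
      apply mul_le_mul_of_nonneg_right _ cabs_nonneg
      have := Summable.sum_le_tsum (Finset.range n) (fun k _ => pow_nonneg hr0 k)
        (summable_geometric_of_lt_one hr0 hr1)
      rwa [tsum_geometric_of_lt_one hr0 hr1] at this
    have hIoi : IntegrableOn (fun t => Real.exp (-2 * α * t) * h t) (Set.Ioi (0:ℝ)) := by
      apply integrableOn_Ioi_of_intervalIntegral_norm_bounded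
        ((1 - r)⁻¹ * ∫ s in (0:ℝ)..1, Real.exp (-2 * α * s) * |h s|) 0 hII
        tendsto_natCast_atTop_atTop
      exact Eventually.of_forall hbound
    -- two limits of the same sequence
    have lim1 : Tendsto (fun n : ℕ => ∫ t in (0:ℝ)..(n:ℝ), Real.exp (-2 * α * t) * h t)
        atTop (nhds (∫ t in Set.Ioi (0:ℝ), Real.exp (-2 * α * t) * h t)) :=
      intervalIntegral_tendsto_integral_Ioi 0 hIoi tendsto_natCast_atTop_atTop
    have lim2 : Tendsto (fun n : ℕ => ∫ t in (0:ℝ)..(n:ℝ), Real.exp (-2 * α * t) * h t)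
        atTop (nhds ((1 - r)⁻¹ * c α)) := by
      have hgeom : Tendsto (fun n : ℕ => ∑ k ∈ Finset.range n, r ^ k) atTop
          (nhds ((1 - r)⁻¹)) := (hasSum_geometric_of_lt_one hr0 hr1).tendsto_sum_nat
      have := hgeom.mul_const (c α)
      refine this.congr fun n => ?_
      rw [aux_partial hm hint hper α n]
    exact tendsto_nhds_unique lim1 lim2
  -- Step 2: c α → ∫ Icc 0 1 h as α → 0⁺
  have hc : Tendsto c (nhdsWithin 0 (Set.Ioi 0)) (nhds (∫ t in Set.Icc (0:ℝ) 1, h t)) := by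
    have hc_eq : ∀ α : ℝ, c α = ∫ s in Set.Ioc (0:ℝ) 1, Real.exp (-2 * α * s) * h s := by
      intro α
      rw [hc_def]
      exact intervalIntegral.integral_of_le zero_le_one
    rw [MeasureTheory.integral_Icc_eq_integral_Ioc]
    have := MeasureTheory.tendsto_integral_filter_of_dominated_convergence
      (μ := volume.restrict (Set.Ioc (0:ℝ) 1))
      (F := fun α : ℝ => fun s : ℝ => Real.exp (-2 * α * s) * h s)
      (f := h) (l := nhdsWithin 0 (Set.Ioi 0)) (bound := fun s => |h s|)
      (Eventually.of_forall fun α =>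
        ((Real.measurable_exp.comp (by fun_prop)).mul hm).aestronglyMeasurable)
      ?_ ?_ ?_
    · exact this.congr fun α => (hc_eq α).symm
    · filter_upwards [eventually_mem_nhdsWithin] with α (hα : α ∈ Set.Ioi 0)
      filter_upwards [ae_restrict_mem measurableSet_Ioc] with s hs
      rw [Real.norm_eq_abs, abs_mul, abs_of_pos (Real.exp_pos _)]
      have hexp : Real.exp (-2 * α * s) ≤ 1 := by
        rw [Real.exp_le_one_iff]
        have h1 : (0:ℝ) < α := hα
        have h2 : (0:ℝ) < s := hs.1
        nlinarith
      calc Real.exp (-2 * α * s) * |h s| ≤ 1 * |h s| :=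
            mul_le_mul_of_nonneg_right hexp (abs_nonneg _)
        _ = |h s| := one_mul _
    · exact (hint.mono_set Set.Ioc_subset_Icc_self).abs
    · refine Eventually.of_forall fun s => ?_
      have hcont : Continuous fun α : ℝ => Real.exp (-2 * α * s) * h s := by continuity
      have := hcont.tendsto 0
      simp only [mul_zero, zero_mul, mul_comm, Real.exp_zero, one_mul] at this
      refine Tendsto.mono_left ?_ nhdsWithin_le_nhds
      simpa using hcont.tendsto 0
  -- Step 3: 2α (1 - e^{-2α})⁻¹ → 1
  have hfactor : Tendsto (fun α : ℝ => 2 * α * (1 - Real.exp (-2 * α))⁻¹)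
      (nhdsWithin 0 (Set.Ioi 0)) (nhds 1) := by
    -- slope of x ↦ 1 - exp (-x) at 0
    have hderiv : HasDerivAt (fun x : ℝ => 1 - Real.exp (-x)) 1 0 := by
      have h1 : HasDerivAt (fun x : ℝ => Real.exp (-x)) (-1) 0 := by
        have := (Real.hasDerivAt_exp (-(0:ℝ))).comp 0 (hasDerivAt_neg (0:ℝ))
        simpa [Function.comp_def] using this
      simpa using h1.const_sub 1
    have hslope : Tendsto (fun x : ℝ => (1 - Real.exp (-x)) / x)
        (nhdsWithin 0 {(0:ℝ)}ᶜ) (nhds 1) := by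
      have := hasDerivAt_iff_tendsto_slope.mp hderiv
      refine this.congr fun x => ?_
      rw [slope_def_field]
      simp
    have hinv : Tendsto (fun x : ℝ => x * (1 - Real.exp (-x))⁻¹)
        (nhdsWithin 0 {(0:ℝ)}ᶜ) (nhds 1) := by
      have := hslope.inv₀ one_ne_zero
      simp only [inv_one] at this
      refine this.congr fun x => ?_
      rw [inv_div, div_eq_mul_inv]
    have hcomp : Tendsto (fun α : ℝ => 2 * α) (nhdsWithin 0 (Set.Ioi 0))
        (nhdsWithin 0 {(0:ℝ)}ᶜ) := by
      rw [tendsto_nhdsWithin_iff]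
      constructor
      · have : Tendsto (fun α : ℝ => 2 * α) (nhds 0) (nhds 0) := by
          simpa using (continuous_mul_left (2:ℝ)).tendsto (0:ℝ)
        exact this.mono_left nhdsWithin_le_nhds
      · filter_upwards [eventually_mem_nhdsWithin] with α (hα : α ∈ Set.Ioi 0)
        simp only [Set.mem_compl_iff, Set.mem_singleton_iff]
        have : (0:ℝ) < α := hα
        positivity
    have := hinv.comp hcomp
    refine this.congr fun α => ?_
    simp only [Function.comp_apply]
    ring_nf
  -- Combine
  have final := hfactor.mul hc
  rw [one_mul] at final
  refine final.congr' ?_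
  filter_upwards [eventually_mem_nhdsWithin] with α (hα : α ∈ Set.Ioi 0)
  rw [main α hα]
  ring
end

section
/- Suppose for each ρ > 0, P^ρ_t denotes the value at time t of the solution to a finite horizon problem on [0, ρ], and suppose the monotonicity P^{⌊ρ⌋}_t ≤ P^ρ_t ≤ P^{⌊ρ⌋+1}_t holds (Loewner order, a.s.) together with the shift compatibility P^{N+s}_{t+s} = P^N_t ∘ θ_s for integer N and s > 0. Then the pointwise increasing limit P̄_t = lim_{N→∞} P^N_t satisfies P̄_{t+s} = P̄_t ∘ θ_s a.s. for all t ≥ 0, s > 0. -/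
open Matrix Filter MeasureTheory

private lemma psd_diag_nonneg {n : ℕ} {X : Matrix (Fin n) (Fin n) ℝ}
    (h : X.PosSemidef) (i : Fin n) : 0 ≤ X i i := by
  simpa using h.dotProduct_mulVec_nonneg (Pi.single i 1)

private lemma psd_trace_nonneg {n : ℕ} {X : Matrix (Fin n) (Fin n) ℝ}
    (h : X.PosSemidef) : 0 ≤ X.trace := by
  exact Finset.sum_nonneg fun i _ => psd_diag_nonneg h i

private lemma psd_diag_le_trace {n : ℕ} {X : Matrix (Fin n) (Fin n) ℝ}
    (h : X.PosSemidef) (i : Fin n) : X i i ≤ X.trace :=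
  Finset.single_le_sum (fun j _ => psd_diag_nonneg h j) (Finset.mem_univ i)

private lemma psd_entry_abs_le {n : ℕ} {X : Matrix (Fin n) (Fin n) ℝ}
    (h : X.PosSemidef) (i j : Fin n) : |X i j| ≤ 2 * X.trace := by
  have hsym : X j i = X i j := by
    have := congrArg (fun M => M i j) h.1
    simpa [Matrix.conjTranspose_apply] using this
  have hp : 0 ≤ X i i + X j j + (X i j + X j i) := by
    have := h.dotProduct_mulVec_nonneg (Pi.single i 1 + Pi.single j 1)
    simp [Matrix.mulVec_add, add_dotProduct, dotProduct_add,
      Matrix.mulVec_single, single_dotProduct] at this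
    linarith
  have hm : 0 ≤ X i i + X j j - (X i j + X j i) := by
    have := h.dotProduct_mulVec_nonneg (Pi.single i 1 - Pi.single j 1)
    simp [Matrix.mulVec_sub, sub_dotProduct, dotProduct_sub,
      Matrix.mulVec_single, single_dotProduct] at this
    linarith
  have hii := psd_diag_le_trace h i
  have hjj := psd_diag_le_trace h j
  rw [abs_le]
  constructor <;> nlinarith

private lemma matrix_squeeze {n : ℕ} {A B C : ℕ → Matrix (Fin n) (Fin n) ℝ}
    {L : Matrix (Fin n) (Fin n) ℝ}
    (hA : Tendsto A atTop (nhds L)) (hC : Tendsto C atTop (nhds L))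
    (h1 : ∀ N, (B N - A N).PosSemidef) (h2 : ∀ N, (C N - B N).PosSemidef) :
    Tendsto B atTop (nhds L) := by
  have htr : Tendsto (fun N => (C N - A N).trace) atTop (nhds 0) := by
    have : Tendsto (fun N => C N - A N) atTop (nhds 0) := by
      simpa using hC.sub hA
    have hcont : Continuous fun M : Matrix (Fin n) (Fin n) ℝ => M.trace :=
      continuous_id.matrix_trace
    simpa [Function.comp_def, Matrix.trace_sub] using (hcont.tendsto 0).comp this
  have hdiff : Tendsto (fun N => B N - A N) atTop (nhds 0) := by
    refine tendsto_pi_nhds.mpr ?_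
    intro i
    rw [tendsto_pi_nhds]
    intro j
    have hbound : ∀ N, ‖(B N - A N) i j‖ ≤ 2 * (C N - A N).trace := by
      intro N
      have h3 : (B N - A N).trace ≤ (C N - A N).trace := by
        have e : (C N - A N).trace = (C N - B N).trace + (B N - A N).trace := by
          rw [Matrix.trace_sub, Matrix.trace_sub, Matrix.trace_sub]; ring
        linarith [psd_trace_nonneg (h2 N)]
      calc ‖(B N - A N) i j‖ ≤ 2 * (B N - A N).trace :=
            psd_entry_abs_le (h1 N) i j
        _ ≤ 2 * (C N - A N).trace := by linarith
    have hg : Tendsto (fun N => 2 * (C N - A N).trace) atTop (nhds 0) := by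
      simpa using htr.const_mul 2
    simpa using squeeze_zero_norm hbound hg
  have : Tendsto (fun N => A N + (B N - A N)) atTop (nhds (L + 0)) :=
    hA.add hdiff
  simpa using this

theorem stmt13 {Ω : Type*} [MeasurableSpace Ω] (P : Measure Ω)
    [IsProbabilityMeasure P] (n : ℕ)
    (θ : ℝ → Ω → Ω) (hθ : ∀ s, MeasurePreserving (θ s) P P)
    (Pr : ℝ → ℝ → Ω → Matrix (Fin n) (Fin n) ℝ)
    (Pbar : ℝ → Ω → Matrix (Fin n) (Fin n) ℝ)
    (hsand : ∀ ρ : ℝ, 0 < ρ → ∀ t : ℝ, ∀ᵐ ω ∂P,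
      (Pr ρ t ω - Pr ((⌊ρ⌋ : ℤ) : ℝ) t ω).PosSemidef ∧
      (Pr (((⌊ρ⌋ : ℤ) : ℝ) + 1) t ω - Pr ρ t ω).PosSemidef)
    (hshift : ∀ (N : ℕ) (s : ℝ), 0 < s → ∀ t : ℝ, ∀ᵐ ω ∂P,
      Pr ((N : ℝ) + s) (t + s) ω = Pr (N : ℝ) t (θ s ω))
    (hlim : ∀ t : ℝ, ∀ᵐ ω ∂P,
      Tendsto (fun N : ℕ => Pr (N : ℝ) t ω) atTop (nhds (Pbar t ω))) :
    ∀ t : ℝ, 0 ≤ t → ∀ s : ℝ, 0 < s →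
      ∀ᵐ ω ∂P, Pbar (t + s) ω = Pbar t (θ s ω) := by
  intro t ht s hs
  set k : ℕ := ⌊s⌋.toNat with hk
  have hks : (⌊s⌋ : ℤ) = (k : ℤ) := (Int.toNat_of_nonneg (Int.floor_nonneg.mpr hs.le)).symm
  have h1 : ∀ᵐ ω ∂P, ∀ N : ℕ,
      (Pr ((N : ℝ) + s) (t + s) ω - Pr ((N + k : ℕ) : ℝ) (t + s) ω).PosSemidef ∧
      (Pr (((N + k : ℕ) : ℝ) + 1) (t + s) ω - Pr ((N : ℝ) + s) (t + s) ω).PosSemidef := by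
    rw [ae_all_iff]
    intro N
    have hpos : (0:ℝ) < (N : ℝ) + s := by positivity
    filter_upwards [hsand ((N : ℝ) + s) hpos (t + s)] with ω hω
    have hfloor : ((⌊(N : ℝ) + s⌋ : ℤ) : ℝ) = ((N + k : ℕ) : ℝ) := by
      rw [Int.floor_natCast_add, hks]
      push_cast
      ring
    rwa [hfloor] at hω
  have h2 : ∀ᵐ ω ∂P, ∀ N : ℕ, Pr ((N : ℝ) + s) (t + s) ω = Pr (N : ℝ) t (θ s ω) := by
    rw [ae_all_iff]
    exact fun N => hshift N s hs t
  have h4 : ∀ᵐ ω ∂P,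
      Tendsto (fun N : ℕ => Pr (N : ℝ) t (θ s ω)) atTop (nhds (Pbar t (θ s ω))) :=
    (hθ s).quasiMeasurePreserving.ae (hlim t)
  filter_upwards [h1, h2, hlim (t + s), h4] with ω H1 H2 H3 H4
  have hA : Tendsto (fun N : ℕ => Pr (((N + k : ℕ)) : ℝ) (t + s) ω) atTop
      (nhds (Pbar (t + s) ω)) := H3.comp (tendsto_add_atTop_nat k)
  have hC : Tendsto (fun N : ℕ => Pr (((N + k : ℕ)) : ℝ) (t + s) ω + 0) atTop
      (nhds (Pbar (t + s) ω)) := by simpa using hA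
  have hC' : Tendsto (fun N : ℕ => Pr ((((N + k : ℕ)) : ℝ) + 1) (t + s) ω) atTop
      (nhds (Pbar (t + s) ω)) := by
    have := H3.comp (tendsto_add_atTop_nat (k + 1))
    have he : ∀ N : ℕ, (((N + (k + 1) : ℕ)) : ℝ) = (((N + k : ℕ)) : ℝ) + 1 := by
      intro N; push_cast; ring
    simpa only [Function.comp_def, he] using this
  have hB : Tendsto (fun N : ℕ => Pr ((N : ℝ) + s) (t + s) ω) atTop
      (nhds (Pbar (t + s) ω)) :=
    matrix_squeeze hA hC' (fun N => (H1 N).1) (fun N => (H1 N).2)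
  have hB' : Tendsto (fun N : ℕ => Pr (N : ℝ) t (θ s ω)) atTop
      (nhds (Pbar (t + s) ω)) := by
    simpa only [funext H2] using hB
  exact tendsto_nhds_unique hB' H4
end
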